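/- arXiv:2506.01354 — 8 statements merged into one kernel-verified Lean document; each statement's English description precedes it below -/
import Mathlib

section
/- Fix ω ∈ ℝ. Define the maps M, α, α⁻¹, Ω : ℝ³ → ℝ³ by M(x,y,z) = (x·cos ω − y·sin ω, x·sin ω + y·cos ω, z − x·y/2 + ((x² − y²)/4)·sin 2ω + (x·y/2)·cos 2ω), α(x,y,z) = (x, y, z + x·y/2), α⁻¹(x,y,z) = (x, y, z − x·y/2), and Ω(x,y,z) = (x·cos ω − y·sin ω, x·sin ω + y·cos ω, z). Then for every point p ∈ ℝ³ one has M(p) = α(Ω(α⁻¹(p))); i.e., the Nil rotation M about the z-axis through angle ω is conjugate, by the quadratic map α, to the Euclidean linear rotation Ω. -/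
open Real

/-- The Nil rotation about the z-axis through angle ω (formula (2.10)). -/
noncomputable def nilRotation (ω : ℝ) : ℝ × ℝ × ℝ → ℝ × ℝ × ℝ :=
  fun p =>
    (p.1 * cos ω - p.2.1 * sin ω,
     p.1 * sin ω + p.2.1 * cos ω,
     p.2.2 - p.1 * p.2.1 / 2 + ((p.1 ^ 2 - p.2.1 ^ 2) / 4) * sin (2 * ω)
       + (p.1 * p.2.1 / 2) * cos (2 * ω))

/-- The quadratic map α. -/
noncomputable def nilAlpha : ℝ × ℝ × ℝ → ℝ × ℝ × ℝ :=
  fun p => (p.1, p.2.1, p.2.2 + p.1 * p.2.1 / 2)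

/-- The quadratic map α⁻¹. -/
noncomputable def nilAlphaInv : ℝ × ℝ × ℝ → ℝ × ℝ × ℝ :=
  fun p => (p.1, p.2.1, p.2.2 - p.1 * p.2.1 / 2)

/-- The Euclidean linear rotation Ω about the z-axis. -/
noncomputable def linRotation (ω : ℝ) : ℝ × ℝ × ℝ → ℝ × ℝ × ℝ :=
  fun p => (p.1 * cos ω - p.2.1 * sin ω, p.1 * sin ω + p.2.1 * cos ω, p.2.2)

/-- The Nil rotation `M` about the z-axis through angle ω is conjugate, by the
quadratic map α, to the Euclidean linear rotation Ω:  `M = α ∘ Ω ∘ α⁻¹`. -/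
theorem nilRotation_conjugate_linear (ω : ℝ) :
    ∀ p : ℝ × ℝ × ℝ, nilRotation ω p = nilAlpha (linRotation ω (nilAlphaInv p)) := by
  intro p
  simp only [nilRotation, nilAlpha, nilAlphaInv, linRotation, Prod.mk.injEq]
  refine ⟨trivial, trivial, ?_⟩
  rw [sin_two_mul, cos_two_mul']
  ring
end

section
/- Let θ, φ ∈ ℝ with sin θ ≠ 0, and let (x(t), y(t), z(t)) = (−(cos θ/sin θ)·cos φ·(e^{−t sin θ} − 1), (cos θ/sin θ)·sin φ·(e^{t sin θ} − 1), t·sin θ) be the Sol translation curve through the origin with parameters (θ, φ). Then for all t ∈ ℝ the orthogonal projection (x(t), z(t)) onto the [x,z] coordinate plane satisfies e^{−z(t)}·cos θ·cos φ = cos θ·cos φ − sin θ·x(t); equivalently, when cos θ·cos φ ≠ 0, the projected curve satisfies the equation z = −log(1 − x·sin θ/(cos θ·cos φ)). -/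
open Real

/-- The `[x,z]`-projection of the Sol translation curve through the origin with
parameters `(θ, φ)` satisfies `e^{−z}·cos θ·cos φ = cos θ·cos φ − sin θ·x`;
equivalently, when `cos θ·cos φ ≠ 0`, it satisfies
`z = −log(1 − x·sin θ/(cos θ·cos φ))`. -/
theorem sol_translation_curve_xz_projection
    (θ φ : ℝ) (hθ : sin θ ≠ 0)
    (x z : ℝ → ℝ)
    (hx : ∀ t : ℝ, x t = -(cos θ / sin θ) * cos φ * (exp (-(t * sin θ)) - 1))
    (hz : ∀ t : ℝ, z t = t * sin θ) :
    ∀ t : ℝ,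
      exp (-(z t)) * (cos θ * cos φ) = cos θ * cos φ - sin θ * x t ∧
      (cos θ * cos φ ≠ 0 →
        z t = -Real.log (1 - x t * sin θ / (cos θ * cos φ))) := by
  intro t
  have h1 : exp (-(z t)) * (cos θ * cos φ) = cos θ * cos φ - sin θ * x t := by
    rw [hx, hz]
    field_simp
    ring
  refine ⟨h1, fun hcc => ?_⟩
  have h2 : 1 - x t * sin θ / (cos θ * cos φ) = exp (-(z t)) := by
    field_simp
    have hc : exp (-(z t)) = (cos θ * cos φ - sin θ * x t) / (cos θ * cos φ) := by
      rw [eq_div_iff hcc]; exact h1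
    rw [hc, sub_div, div_self hcc]; ring
  rw [h2, Real.log_exp]
  ring
end

section
/- Let θ, φ ∈ ℝ with sin θ ≠ 0, and let (x(t), z(t)) = (−(cos θ/sin θ)·cos φ·(e^{−t sin θ} − 1), t·sin θ) be the orthogonal projection onto the [x,z] plane of the Sol translation curve through the origin with parameters (θ, φ). Then for all t ∈ ℝ the image under the map m(x,z) = (x, e^{−z}) satisfies (x(t), e^{−z(t)}) = (0, 1) + λ(t)·(cos θ·cos φ, −sin θ), where λ(t) = (1 − e^{−t sin θ})/sin θ. In particular, all points (x(t), e^{−z(t)}) lie on a single Euclidean straight line through (0,1), so the m-image of the projected Sol translation curve is a Euclidean straight segment. -/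
open Real

/-- The image under `m(x,z) = (x, e^{−z})` of the `[x,z]`-projection of the Sol
translation curve through the origin with parameters `(θ, φ)`, `sin θ ≠ 0`, is
a Euclidean straight segment: it lies on the line through `(0,1)` with direction
`(cos θ·cos φ, −sin θ)`, the point at arc-length parameter `t` corresponding to
the line parameter `λ(t) = (1 − e^{−t·sin θ})/sin θ`. -/
theorem sol_translation_curve_m_image_is_line
    (θ φ : ℝ) (hθ : sin θ ≠ 0)
    (x z : ℝ → ℝ)
    (hx : ∀ t : ℝ, x t = -(cos θ / sin θ) * cos φ * (exp (-(t * sin θ)) - 1))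
    (hz : ∀ t : ℝ, z t = t * sin θ) :
    ∀ t : ℝ,
      ((x t, exp (-(z t))) : ℝ × ℝ) =
        ((0 : ℝ), (1 : ℝ)) +
          ((1 - exp (-(t * sin θ))) / sin θ) • ((cos θ * cos φ, -sin θ) : ℝ × ℝ) := by
  intro t
  rw [hx, hz, Prod.ext_iff]
  constructor <;> simp [Prod.smul_def] <;> field_simp <;> ring
end

section
/- Let θ, φ ∈ ℝ with sin θ ≠ 0, let (x(t), z(t)) = (−(cos θ/sin θ)·cos φ·(e^{−t sin θ} − 1), t·sin θ), and set M(s) = (x(s), e^{−z(s)}) ∈ ℝ² (the m-image of the [x,z]-projection of the Sol translation curve through the origin). Then for all 0 < s₁ < s₂ the Euclidean simple ratio of the collinear points M(0) = (0,1), M(s₁), M(s₂) satisfies dist(M(0), M(s₁)) / dist(M(s₁), M(s₂)) = (1 − e^{−s₁ sin θ}) / (e^{−s₁ sin θ} − e^{−s₂ sin θ}); i.e., the Euclidean simple ratio of the m-images equals the Sol simple ratio of the corresponding points on the translation curve. -/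
open Real

/-- Euclidean distance in the plane ℝ². -/
noncomputable def euclDist2 (a b : ℝ × ℝ) : ℝ :=
  Real.sqrt ((a.1 - b.1) ^ 2 + (a.2 - b.2) ^ 2)

/-- For the `m`-image `M(s) = (x(s), e^{−z(s)})` of the `[x,z]`-projection of a Sol
translation curve through the origin, the Euclidean simple ratio of the collinear
points `M(0) = (0,1)`, `M(s₁)`, `M(s₂)` (for `0 < s₁ < s₂`) equals
`(1 − e^{−s₁ sin θ})/(e^{−s₁ sin θ} − e^{−s₂ sin θ})`, the Sol simple ratio of the
corresponding points of the translation curve. -/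
theorem sol_simple_ratio_via_m_image
    (θ φ : ℝ) (hθ : sin θ ≠ 0)
    (x z : ℝ → ℝ)
    (hx : ∀ t : ℝ, x t = -(cos θ / sin θ) * cos φ * (exp (-(t * sin θ)) - 1))
    (hz : ∀ t : ℝ, z t = t * sin θ)
    (M : ℝ → ℝ × ℝ) (hM : ∀ s : ℝ, M s = (x s, exp (-(z s))))
    (s₁ s₂ : ℝ) (hs₁ : 0 < s₁) (hs₂ : s₁ < s₂) :
    euclDist2 (M 0) (M s₁) / euclDist2 (M s₁) (M s₂) =
      (1 - exp (-(s₁ * sin θ))) / (exp (-(s₁ * sin θ)) - exp (-(s₂ * sin θ))) := by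
  set c : ℝ := -(cos θ / sin θ) * cos φ with hc
  set E : ℝ → ℝ := fun s => exp (-(s * sin θ)) with hE
  have key : ∀ s t : ℝ, euclDist2 (M s) (M t) = Real.sqrt (c ^ 2 + 1) * |E s - E t| := by
    intro s t
    have h1 : (M s).1 - (M t).1 = c * (E s - E t) := by
      simp only [hM, hx, hE]; ring
    have h2 : (M s).2 - (M t).2 = E s - E t := by
      simp only [hM, hz, hE]
    unfold euclDist2
    rw [h1, h2]
    have h3 : (c * (E s - E t)) ^ 2 + (E s - E t) ^ 2 = (c ^ 2 + 1) * (E s - E t) ^ 2 := by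
      ring
    rw [h3, Real.sqrt_mul (by positivity), Real.sqrt_sq_eq_abs]
  have hsq : Real.sqrt (c ^ 2 + 1) ≠ 0 := by positivity
  have hE0 : E 0 = 1 := by simp [hE]
  rw [key, key, hE0, mul_div_mul_left _ _ hsq]
  rcases lt_or_gt_of_ne hθ with hneg | hpos
  · have h1 : E s₁ > 1 := by
      rw [hE]; simp only
      rw [show (1:ℝ) = exp 0 by simp]
      apply exp_lt_exp.mpr; nlinarith
    have h2 : E s₁ < E s₂ := by
      rw [hE]; simp only
      apply exp_lt_exp.mpr; nlinarith
    rw [abs_of_neg (by linarith), abs_of_neg (by linarith), neg_div_neg_eq]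
  · have h1 : E s₁ < 1 := by
      rw [hE]; simp only
      rw [show (1:ℝ) = exp 0 by simp]
      apply exp_lt_exp.mpr; nlinarith
    have h2 : E s₂ < E s₁ := by
      rw [hE]; simp only
      apply exp_lt_exp.mpr; nlinarith
    rw [abs_of_pos (by linarith), abs_of_pos (by linarith)]
end

section
/- (Ceva's theorem for translation triangles in Sol.) Let A₀, A₁, A₂ ∈ ℝ³ be points of Sol such that Π(A₀), Π(A₁), Π(A₂) are affinely independent in ℝ², where Π(a,b,c) = (a, e^{−c}). For (i,j) ∈ {(0,1),(1,2),(2,0)} let Γ_{ij} be a Sol translation curve with parameters (θ_{ij}, φ_{ij}), sin θ_{ij} ≠ 0, with Γ_{ij}(0) = A_i and Γ_{ij}(L_{ij}) = A_j for some L_{ij} > 0. Let P = Γ₀₁(s_P), Q = Γ₁₂(s_Q), R = Γ₂₀(s_R) with s_P ∉ {0, L₀₁}, s_Q ∉ {0, L₁₂}, s_R ∉ {0, L₂₀}. Suppose there exists a point T^m ∈ ℝ², not on any of the three Euclidean lines through pairs Π(A_i), Π(A_j), lying on the Euclidean line through Π(A₀) and Π(Q), on the line through Π(A₁) and Π(R),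 and on the line through Π(A₂) and Π(P) (this is the Π-image of the condition that the connecting curves A₀T, A₁T, A₂T of Definition 3.21 pass through a common point T of the translation-triangle surface). Then σ(s_P, L₀₁; sin θ₀₁) · σ(s_Q, L₁₂; sin θ₁₂) · σ(s_R, L₂₀; sin θ₂₀) = 1, where σ(s, L; k) = (1 − e^{−s k})/(e^{−s k} − e^{−L k}) is the Sol simple ratio. -/
open Real

/-- The Sol translation curve starting at `S = (p,q,r)` with parameters `(θ, φ)`,
parametrized by translation arc length. -/
noncomputable def solCurve (S : ℝ × ℝ × ℝ) (θ φ : ℝ) : ℝ → ℝ × ℝ × ℝ :=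
  fun t =>
    (S.1 + exp (-S.2.2) * (-(cos θ / sin θ) * cos φ * (exp (-(t * sin θ)) - 1)),
     S.2.1 + exp S.2.2 * ((cos θ / sin θ) * sin φ * (exp (t * sin θ) - 1)),
     S.2.2 + t * sin θ)

/-- The composition `Π(a,b,c) = (a, e^{−c})` of the orthogonal projection onto the
`[x,z]` plane with the map `m` to the upper half-plane. -/
noncomputable def solProj : ℝ × ℝ × ℝ → ℝ × ℝ := fun S => (S.1, exp (-S.2.2))

/-- The Sol simple ratio `σ(s, L; k) = (1 − e^{−s·k})/(e^{−s·k} − e^{−L·k})` of the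
points `Γ(0)`, `Γ(s)`, `Γ(L)` of a translation curve with `k = sin θ`. -/
noncomputable def solRatio (s L k : ℝ) : ℝ :=
  (1 - exp (-(s * k))) / (exp (-(s * k)) - exp (-(L * k)))


/-- Cross-product (twice the signed area) of the triangle `X Y T` in the plane. -/
noncomputable def solCr (X Y T : ℝ × ℝ) : ℝ :=
  (Y.1 - X.1) * (T.2 - X.2) - (Y.2 - X.2) * (T.1 - X.1)

lemma solCr_eq_zero_of_mem {X Y T : ℝ × ℝ} (h : T ∈ affineSpan ℝ {X, Y}) :
    solCr X Y T = 0 := by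
  have h' : (T - X) +ᵥ X ∈ affineSpan ℝ {X, Y} := by
    simpa [vadd_eq_add, sub_add_cancel] using h
  obtain ⟨r, hr⟩ := vadd_left_mem_affineSpan_pair.mp h'
  have h1 : T.1 - X.1 = r * (Y.1 - X.1) := by
    have := congrArg Prod.fst hr
    simpa [vsub_eq_sub, smul_eq_mul] using this.symm
  have h2 : T.2 - X.2 = r * (Y.2 - X.2) := by
    have := congrArg Prod.snd hr
    simpa [vsub_eq_sub, smul_eq_mul] using this.symm
  simp only [solCr, h1, h2]; ring

lemma mem_of_solCr_eq_zero {X Y T : ℝ × ℝ} (hXY : X ≠ Y) (h : solCr X Y T = 0) :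
    T ∈ affineSpan ℝ {X, Y} := by
  simp only [solCr] at h
  have key : ∀ r : ℝ, r • (Y - X) + X = T → T ∈ affineSpan ℝ {X, Y} := by
    intro r hr
    have := smul_vsub_vadd_mem_affineSpan_pair (k := ℝ) r X Y
    simpa [vsub_eq_sub, vadd_eq_add, hr] using this
  rcases eq_or_ne (Y.1 - X.1) 0 with h1 | h1
  · have h2 : Y.2 - X.2 ≠ 0 := by
      intro h2
      exact hXY (Prod.ext (by linarith [sub_eq_zero.mp h1]) (by linarith [sub_eq_zero.mp h2])).symm
    have hT1 : T.1 = X.1 := by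
      have hz : (Y.2 - X.2) * (T.1 - X.1) = 0 := by linear_combination -h + (T.2 - X.2) * h1
      have := (mul_eq_zero.mp hz).resolve_left h2
      linarith
    refine key ((T.2 - X.2) / (Y.2 - X.2)) ?_
    refine Prod.ext ?_ ?_
    · simp [smul_eq_mul, hT1, h1, sub_eq_zero.mp h1]
    · simp only [Prod.fst_add, Prod.snd_add, Prod.smul_snd, Prod.snd_sub, smul_eq_mul]
      field_simp
      ring
  · refine key ((T.1 - X.1) / (Y.1 - X.1)) ?_
    refine Prod.ext ?_ ?_
    · simp only [Prod.fst_add, Prod.smul_fst, Prod.fst_sub, smul_eq_mul]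
      field_simp
      ring
    · simp only [Prod.snd_add, Prod.smul_snd, Prod.snd_sub, smul_eq_mul]
      field_simp
      linear_combination -h

lemma solCr_ne_zero {X Y T : ℝ × ℝ} (hXY : X ≠ Y) (h : T ∉ affineSpan ℝ {X, Y}) :
    solCr X Y T ≠ 0 := fun hc => h (mem_of_solCr_eq_zero hXY hc)

lemma solProj_solCurve (S : ℝ × ℝ × ℝ) (θ φ t : ℝ) :
    solProj (solCurve S θ φ t) =
      (S.1 + (exp (-(t * sin θ)) - 1) * (exp (-S.2.2) * (-(cos θ / sin θ) * cos φ)),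
       exp (-S.2.2) * exp (-(t * sin θ))) := by
  simp only [solProj, solCurve, Prod.mk.injEq]
  constructor
  · ring
  · rw [← Real.exp_add]; ring_nf

/-- Parametrization of the projected side: the projection of the point at parameter `s`
is an affine combination of the endpoint projections, with related simple-ratio facts. -/
lemma side_param (A B : ℝ × ℝ × ℝ) (θ φ : ℝ) (hθ : sin θ ≠ 0) (L s : ℝ)
    (hL : L ≠ 0) (hs0 : s ≠ 0) (hsL : s ≠ L) (hB : solCurve A θ φ L = B) :
    ∃ lam : ℝ,
      (solProj (solCurve A θ φ s)).1 = (solProj A).1 + lam * ((solProj B).1 - (solProj A).1) ∧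
      (solProj (solCurve A θ φ s)).2 = (solProj A).2 + lam * ((solProj B).2 - (solProj A).2) ∧
      1 - lam ≠ 0 ∧ solRatio s L (sin θ) = lam / (1 - lam) := by
  subst hB
  have hv1 : 1 - exp (-(L * sin θ)) ≠ 0 := by
    intro hc
    have h1 : exp (-(L * sin θ)) = 1 := by linarith
    rw [Real.exp_eq_one_iff, neg_eq_zero] at h1
    exact (mul_ne_zero hL hθ) h1
  have hu1 : 1 - exp (-(s * sin θ)) ≠ 0 := by
    intro hc
    have h1 : exp (-(s * sin θ)) = 1 := by linarith
    rw [Real.exp_eq_one_iff, neg_eq_zero] at h1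
    exact (mul_ne_zero hs0 hθ) h1
  have huv : exp (-(s * sin θ)) - exp (-(L * sin θ)) ≠ 0 := by
    intro hc
    have h1 : exp (-(s * sin θ)) = exp (-(L * sin θ)) := by linarith
    rw [Real.exp_eq_exp, neg_inj] at h1
    exact hsL (mul_right_cancel₀ hθ h1)
  refine ⟨(1 - exp (-(s * sin θ))) / (1 - exp (-(L * sin θ))), ?_, ?_, ?_, ?_⟩
  · rw [solProj_solCurve, solProj_solCurve]
    simp only [solProj]
    rw [div_mul_eq_mul_div, eq_comm, add_div' _ _ _ hv1, div_eq_iff hv1]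
    ring
  · rw [solProj_solCurve, solProj_solCurve]
    simp only [solProj]
    rw [div_mul_eq_mul_div, eq_comm, add_div' _ _ _ hv1, div_eq_iff hv1]
    ring
  · intro hc
    apply huv
    rw [sub_eq_zero, eq_comm, div_eq_one_iff_eq hv1] at hc
    linarith
  · have h1 : 1 - (1 - exp (-(s * sin θ))) / (1 - exp (-(L * sin θ)))
        = (exp (-(s * sin θ)) - exp (-(L * sin θ))) / (1 - exp (-(L * sin θ))) := by
      rw [eq_div_iff hv1, sub_mul, div_mul_cancel₀ _ hv1]; ring
    rw [solRatio, h1]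
    rw [div_div_div_cancel_right₀ hv1]

/-- **Ceva's theorem for translation triangles in Sol.** -/
theorem sol_ceva
    (A₀ A₁ A₂ : ℝ × ℝ × ℝ)
    (hind : AffineIndependent ℝ ![solProj A₀, solProj A₁, solProj A₂])
    (θ₀₁ φ₀₁ θ₁₂ φ₁₂ θ₂₀ φ₂₀ : ℝ)
    (hθ₀₁ : sin θ₀₁ ≠ 0) (hθ₁₂ : sin θ₁₂ ≠ 0) (hθ₂₀ : sin θ₂₀ ≠ 0)
    (L₀₁ L₁₂ L₂₀ : ℝ) (hL₀₁ : 0 < L₀₁) (hL₁₂ : 0 < L₁₂) (hL₂₀ : 0 < L₂₀)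
    (hA₁ : solCurve A₀ θ₀₁ φ₀₁ L₀₁ = A₁)
    (hA₂ : solCurve A₁ θ₁₂ φ₁₂ L₁₂ = A₂)
    (hA₀ : solCurve A₂ θ₂₀ φ₂₀ L₂₀ = A₀)
    (sP sQ sR : ℝ)
    (hsP0 : sP ≠ 0) (hsP1 : sP ≠ L₀₁) (hsQ0 : sQ ≠ 0) (hsQ1 : sQ ≠ L₁₂)
    (hsR0 : sR ≠ 0) (hsR1 : sR ≠ L₂₀)
    (P Q R : ℝ × ℝ × ℝ)
    (hP : P = solCurve A₀ θ₀₁ φ₀₁ sP)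
    (hQ : Q = solCurve A₁ θ₁₂ φ₁₂ sQ)
    (hR : R = solCurve A₂ θ₂₀ φ₂₀ sR)
    (T : ℝ × ℝ)
    (hT01 : T ∉ affineSpan ℝ {solProj A₀, solProj A₁})
    (hT12 : T ∉ affineSpan ℝ {solProj A₁, solProj A₂})
    (hT20 : T ∉ affineSpan ℝ {solProj A₂, solProj A₀})
    (h0 : T ∈ affineSpan ℝ {solProj A₀, solProj Q})
    (h1 : T ∈ affineSpan ℝ {solProj A₁, solProj R})
    (h2 : T ∈ affineSpan ℝ {solProj A₂, solProj P}) :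
    solRatio sP L₀₁ (sin θ₀₁) * solRatio sQ L₁₂ (sin θ₁₂) * solRatio sR L₂₀ (sin θ₂₀) = 1 := by
  -- The projected vertices are pairwise distinct.
  have h01 : solProj A₀ ≠ solProj A₁ := by
    intro h
    have : (0 : Fin 3) = 1 := hind.injective (by simpa using h)
    simp at this
  have h12 : solProj A₁ ≠ solProj A₂ := by
    intro h
    have : (1 : Fin 3) = 2 := hind.injective (by simpa using h)
    simp at this
  have h20 : solProj A₂ ≠ solProj A₀ := by
    intro h
    have : (2 : Fin 3) = 0 := hind.injective (by simpa using h)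
    simp at this
  -- The cross products of the sides with T are nonzero.
  have hcP : solCr (solProj A₀) (solProj A₁) T ≠ 0 := solCr_ne_zero h01 hT01
  have hcQ : solCr (solProj A₁) (solProj A₂) T ≠ 0 := solCr_ne_zero h12 hT12
  have hcR : solCr (solProj A₂) (solProj A₀) T ≠ 0 := solCr_ne_zero h20 hT20
  -- Affine parameters of P, Q, R on the projected sides.
  obtain ⟨lP, eP1, eP2, hlP, hPr⟩ :=
    side_param A₀ A₁ θ₀₁ φ₀₁ hθ₀₁ L₀₁ sP hL₀₁.ne' hsP0 hsP1 hA₁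
  obtain ⟨lQ, eQ1, eQ2, hlQ, hQr⟩ :=
    side_param A₁ A₂ θ₁₂ φ₁₂ hθ₁₂ L₁₂ sQ hL₁₂.ne' hsQ0 hsQ1 hA₂
  obtain ⟨lR, eR1, eR2, hlR, hRr⟩ :=
    side_param A₂ A₀ θ₂₀ φ₂₀ hθ₂₀ L₂₀ sR hL₂₀.ne' hsR0 hsR1 hA₀
  -- Collinearity equations from the concurrency hypotheses.
  have eq2 : solCr (solProj A₂) (solProj P) T = 0 := solCr_eq_zero_of_mem h2
  have eq0 : solCr (solProj A₀) (solProj Q) T = 0 := solCr_eq_zero_of_mem h0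
  have eq1 : solCr (solProj A₁) (solProj R) T = 0 := solCr_eq_zero_of_mem h1
  rw [hP] at eq2
  rw [hQ] at eq0
  rw [hR] at eq1
  simp only [solCr] at eq2 eq0 eq1
  rw [eP1, eP2] at eq2
  rw [eQ1, eQ2] at eq0
  rw [eR1, eR2] at eq1
  -- Barycentric relations.
  have key2 : lP * (solCr (solProj A₁) (solProj A₂) T + solCr (solProj A₂) (solProj A₀) T)
      = solCr (solProj A₂) (solProj A₀) T := by
    simp only [solCr]
    linear_combination -eq2
  have key0 : lQ * (solCr (solProj A₀) (solProj A₁) T + solCr (solProj A₂) (solProj A₀) T)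
      = solCr (solProj A₀) (solProj A₁) T := by
    simp only [solCr]
    linear_combination -eq0
  have key1 : lR * (solCr (solProj A₀) (solProj A₁) T + solCr (solProj A₁) (solProj A₂) T)
      = solCr (solProj A₁) (solProj A₂) T := by
    simp only [solCr]
    linear_combination -eq1
  -- Express each simple ratio as a quotient of cross products.
  have e2 : lP / (1 - lP)
      = solCr (solProj A₂) (solProj A₀) T / solCr (solProj A₁) (solProj A₂) T := by
    rw [div_eq_div_iff hlP hcQ]
    linear_combination key2
  have e0 : lQ / (1 - lQ)
      = solCr (solProj A₀) (solProj A₁) T / solCr (solProj A₂) (solProj A₀) T := by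
    rw [div_eq_div_iff hlQ hcR]
    linear_combination key0
  have e1 : lR / (1 - lR)
      = solCr (solProj A₁) (solProj A₂) T / solCr (solProj A₀) (solProj A₁) T := by
    rw [div_eq_div_iff hlR hcP]
    linear_combination key1
  rw [hPr, hQr, hRr, e2, e0, e1]
  field_simp
end

section
/- (Menelaus' theorem in the hyperbolic plane.) Let A, B, C be three points of the hyperbolic plane ℍ not lying on a common geodesic. Let P, Q, R ∈ ℍ be points, none equal to any of A, B, C, such that P is collinear with A and B, Q is collinear with B and C, R is collinear with C and A, and P, Q, R are collinear (lie on a common geodesic). Then s(A,P,B) · s(B,Q,C) · s(C,R,A) = −1, where s denotes the signed hyperbolic simple ratio. -/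
open Real Classical

/-- Three points of the hyperbolic plane lie on a common geodesic iff one of them
lies (metrically) between the other two. -/
def HypCollinear (X Y Z : UpperHalfPlane) : Prop :=
  dist X Y + dist Y Z = dist X Z ∨
  dist Y X + dist X Z = dist Y Z ∨
  dist X Z + dist Z Y = dist X Y

/-- `P` lies strictly between `X` and `Y` in the hyperbolic plane. -/
def HypBetween (X P Y : UpperHalfPlane) : Prop :=
  dist X P + dist P Y = dist X Y ∧ P ≠ X ∧ P ≠ Y

/-- The signed hyperbolic simple ratio of three points on a common geodesic. -/
noncomputable def hypRatio (X P Y : UpperHalfPlane) : ℝ :=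
  if HypBetween X P Y then Real.sinh (dist X P) / Real.sinh (dist P Y)
  else -Real.sinh (dist X P) / Real.sinh (dist P Y)

local notation "ℍ" => UpperHalfPlane

noncomputable def ff1 (z : ℍ) : ℝ := (z.re ^ 2 + z.im ^ 2 + 1) / (2 * z.im)
noncomputable def ff2 (z : ℍ) : ℝ := z.re / z.im
noncomputable def ff3 (z : ℍ) : ℝ := (z.re ^ 2 + z.im ^ 2 - 1) / (2 * z.im)
noncomputable def mink (z w : ℍ) : ℝ := ff1 z * ff1 w - ff2 z * ff2 w - ff3 z * ff3 w

lemma mink_eq_cosh (z w : ℍ) : mink z w = Real.cosh (dist z w) := by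
  rw [UpperHalfPlane.cosh_dist, Complex.dist_eq, Complex.sq_norm, Complex.normSq_apply]
  have hz := z.im_pos
  have hw := w.im_pos
  simp only [mink, ff1, ff2, ff3, Complex.sub_re, Complex.sub_im,
    UpperHalfPlane.coe_re, UpperHalfPlane.coe_im]
  field_simp
  ring

lemma idA (p q : ℝ) : sinh (p + q) * cosh p = sinh q + sinh p * cosh (p + q) := by
  rw [Real.sinh_add, Real.cosh_add]
  linear_combination Real.sinh q * Real.cosh_sq_sub_sinh_sq p

lemma idB (p q : ℝ) : sinh (p + q) * cosh q = sinh q * cosh (p + q) + sinh p := by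
  rw [Real.sinh_add, Real.cosh_add]
  linear_combination Real.sinh p * Real.cosh_sq_sub_sinh_sq q

lemma idC (p q : ℝ) : sinh (p + q) = sinh q * cosh p + sinh p * cosh q := by
  rw [Real.sinh_add]; ring

lemma ff1_sq (z : ℍ) : ff1 z ^ 2 = 1 + ff2 z ^ 2 + ff3 z ^ 2 := by
  have hz := z.im_pos
  simp only [ff1, ff2, ff3]
  field_simp
  ring

lemma ff1_pos (z : ℍ) : 0 < ff1 z := by
  have hz := z.im_pos
  have : 0 < z.re ^ 2 + z.im ^ 2 + 1 := by positivity
  exact div_pos this (by linarith)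

lemma null_lemma (z : ℍ) (v1 v2 v3 : ℝ)
    (h0 : v1 ^ 2 - v2 ^ 2 - v3 ^ 2 = 0)
    (h1 : v1 * ff1 z - v2 * ff2 z - v3 * ff3 z = 0) :
    v1 = 0 ∧ v2 = 0 ∧ v3 = 0 := by
  have hf := ff1_sq z
  have hp := ff1_pos z
  have hv1 : v1 = 0 := by
    have key : v1 * ff1 z = v2 * ff2 z + v3 * ff3 z := by linarith
    have hsq : (v1 * ff1 z) ^ 2 = (v2 * ff2 z + v3 * ff3 z) ^ 2 := by rw [key]
    have hle : v1 ^ 2 ≤ 0 := by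
      nlinarith [sq_nonneg (v2 * ff3 z - v3 * ff2 z), hsq, hf, h0, sq_nonneg v1]
    have := sq_nonneg v1
    nlinarith
  refine ⟨hv1, ?_, ?_⟩ <;> nlinarith [sq_nonneg v2, sq_nonneg v3]

lemma dep_of_gram (A B P : ℍ) (s a b : ℝ)
    (h1 : s * mink P A = a * mink A A + b * mink B A)
    (h2 : s * mink P B = a * mink A B + b * mink B B)
    (h3 : s * mink P P = a * mink A P + b * mink B P) :
    s * ff1 P = a * ff1 A + b * ff1 B ∧
    s * ff2 P = a * ff2 A + b * ff2 B ∧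
    s * ff3 P = a * ff3 A + b * ff3 B := by
  simp only [mink] at h1 h2 h3
  set v1 := s * ff1 P - a * ff1 A - b * ff1 B with hv1
  set v2 := s * ff2 P - a * ff2 A - b * ff2 B with hv2
  set v3 := s * ff3 P - a * ff3 A - b * ff3 B with hv3
  have e1 : v1 * ff1 A - v2 * ff2 A - v3 * ff3 A = 0 := by
    rw [hv1, hv2, hv3]; linear_combination h1
  have e2 : v1 * ff1 B - v2 * ff2 B - v3 * ff3 B = 0 := by
    rw [hv1, hv2, hv3]; linear_combination h2
  have e3 : v1 * ff1 P - v2 * ff2 P - v3 * ff3 P = 0 := by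
    rw [hv1, hv2, hv3]; linear_combination h3
  have h0 : v1 ^ 2 - v2 ^ 2 - v3 ^ 2 = 0 := by
    have hh : v1 ^ 2 - v2 ^ 2 - v3 ^ 2 =
        s * (v1 * ff1 P - v2 * ff2 P - v3 * ff3 P)
        - a * (v1 * ff1 A - v2 * ff2 A - v3 * ff3 A)
        - b * (v1 * ff1 B - v2 * ff2 B - v3 * ff3 B) := by
      rw [hv1, hv2, hv3]; ring
    rw [hh, e1, e2, e3]; ring
  obtain ⟨z1, z2, z3⟩ := null_lemma P v1 v2 v3 h0 e3
  rw [hv1] at z1; rw [hv2] at z2; rw [hv3] at z3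
  refine ⟨by linarith, by linarith, by linarith⟩

lemma indep (A B C : ℍ) (h : ¬ HypCollinear A B C) (x y z : ℝ)
    (h1 : x * ff1 A + y * ff1 B + z * ff1 C = 0)
    (h2 : x * ff2 A + y * ff2 B + z * ff2 C = 0)
    (h3 : x * ff3 A + y * ff3 B + z * ff3 C = 0) :
    x = 0 ∧ y = 0 ∧ z = 0 := by
  set a := Real.cosh (dist A B) with ha
  set b := Real.cosh (dist A C) with hb
  set c := Real.cosh (dist B C) with hc
  have gX : ∀ X : ℍ, x * mink A X + y * mink B X + z * mink C X = 0 := by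
    intro X
    simp only [mink]
    linear_combination ff1 X * h1 - ff2 X * h2 - ff3 X * h3
  have g1 : x + y * a + z * b = 0 := by
    have := gX A
    rwa [mink_eq_cosh, mink_eq_cosh, mink_eq_cosh, dist_self, Real.cosh_zero,
      dist_comm B A, dist_comm C A, mul_one] at this
  have g2 : x * a + y + z * c = 0 := by
    have := gX B
    rwa [mink_eq_cosh, mink_eq_cosh, mink_eq_cosh, dist_self, Real.cosh_zero,
      dist_comm C B, mul_one] at this
  have g3 : x * b + y * c + z = 0 := by
    have := gX C
    rwa [mink_eq_cosh, mink_eq_cosh, mink_eq_cosh, dist_self, Real.cosh_zero,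
      mul_one] at this
  by_contra hcon
  have hD : 1 + 2 * a * b * c - a ^ 2 - b ^ 2 - c ^ 2 = 0 := by
    have hx : (1 + 2 * a * b * c - a ^ 2 - b ^ 2 - c ^ 2) * x = 0 := by
      linear_combination (1 - c ^ 2) * g1 + (b * c - a) * g2 + (a * c - b) * g3
    have hy : (1 + 2 * a * b * c - a ^ 2 - b ^ 2 - c ^ 2) * y = 0 := by
      linear_combination (b * c - a) * g1 + (1 - b ^ 2) * g2 + (a * b - c) * g3
    have hz : (1 + 2 * a * b * c - a ^ 2 - b ^ 2 - c ^ 2) * z = 0 := by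
      linear_combination (a * c - b) * g1 + (a * b - c) * g2 + (1 - a ^ 2) * g3
    by_contra hD0
    exact hcon ⟨by rcases mul_eq_zero.mp hx with h' | h'; exact absurd h' hD0; exact h',
      by rcases mul_eq_zero.mp hy with h' | h'; exact absurd h' hD0; exact h',
      by rcases mul_eq_zero.mp hz with h' | h'; exact absurd h' hD0; exact h'⟩
  apply h
  have s1 : Real.sinh (dist A B) ^ 2 = a ^ 2 - 1 := by rw [Real.sinh_sq, ha]
  have s2 : Real.sinh (dist A C) ^ 2 = b ^ 2 - 1 := by rw [Real.sinh_sq, hb]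
  have hfac : (c - a * b - Real.sinh (dist A B) * Real.sinh (dist A C)) *
      (c - a * b + Real.sinh (dist A B) * Real.sinh (dist A C)) = 0 := by
    linear_combination (-1 : ℝ) * hD - (Real.sinh (dist A C) ^ 2) * s1
      - (a ^ 2 - 1) * s2
  have habs : ∀ u v : ℝ, Real.cosh u = Real.cosh v → 0 ≤ u → |u| = |v| := by
    intro u v huv _
    exact le_antisymm (Real.cosh_le_cosh.mp huv.le) (Real.cosh_le_cosh.mp huv.ge)
  rcases mul_eq_zero.mp hfac with h' | h'
  · -- c = cosh (dAB + dAC)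
    have hcc : Real.cosh (dist B C) = Real.cosh (dist A B + dist A C) := by
      rw [Real.cosh_add, ← ha, ← hb, ← hc]; linarith
    have := habs _ _ hcc dist_nonneg
    rw [abs_of_nonneg dist_nonneg,
      abs_of_nonneg (by positivity : (0:ℝ) ≤ dist A B + dist A C)] at this
    exact Or.inr (Or.inl (by rw [dist_comm B A]; linarith))
  · -- c = cosh (dAB - dAC)
    have hcc : Real.cosh (dist B C) = Real.cosh (dist A B - dist A C) := by
      rw [Real.cosh_sub, ← ha, ← hb, ← hc]; linarith
    have habs' := habs _ _ hcc dist_nonneg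
    rw [abs_of_nonneg dist_nonneg] at habs'
    rcases le_or_gt (dist A C) (dist A B) with hle | hlt
    · rw [abs_of_nonneg (by linarith)] at habs'
      exact Or.inr (Or.inr (by rw [dist_comm C B]; linarith))
    · rw [abs_of_neg (by linarith)] at habs'
      exact Or.inl (by linarith)
lemma div_coeff {s a b x u v : ℝ} (hs : s ≠ 0) (h : s * x = a * u + b * v) :
    x = a / s * u + b / s * v := by
  rw [div_mul_eq_mul_div, div_mul_eq_mul_div, ← add_div, eq_div_iff hs]
  linear_combination h

lemma hypRatio_ne_zero (X P Y : ℍ) (h1 : P ≠ X) (h2 : P ≠ Y) : hypRatio X P Y ≠ 0 := by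
  have hn : Real.sinh (dist X P) ≠ 0 :=
    Real.sinh_ne_zero.mpr (dist_ne_zero.mpr (Ne.symm h1))
  have hd : Real.sinh (dist P Y) ≠ 0 :=
    Real.sinh_ne_zero.mpr (dist_ne_zero.mpr h2)
  unfold hypRatio
  split
  · exact div_ne_zero hn hd
  · exact div_ne_zero (neg_ne_zero.mpr hn) hd

lemma side_coeffs (A B P : ℍ) (hAB : A ≠ B) (hPA : P ≠ A) (hPB : P ≠ B)
    (hP : HypCollinear A P B) :
    ∃ α β : ℝ, α ≠ 0 ∧ β = hypRatio A P B * α ∧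
      ff1 P = α * ff1 A + β * ff1 B ∧
      ff2 P = α * ff2 A + β * ff2 B ∧
      ff3 P = α * ff3 A + β * ff3 B := by
  have hp : 0 < dist A P := dist_pos.mpr (Ne.symm hPA)
  have hq : 0 < dist P B := dist_pos.mpr hPB
  have hc0 : 0 < dist A B := dist_pos.mpr hAB
  have hsp : 0 < Real.sinh (dist A P) := Real.sinh_pos_iff.mpr hp
  have hsq : 0 < Real.sinh (dist P B) := Real.sinh_pos_iff.mpr hq
  have hsc : 0 < Real.sinh (dist A B) := Real.sinh_pos_iff.mpr hc0
  rcases hP with hc | hc | hc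
  · -- P between A and B
    set p := dist A P with hdp
    set q := dist P B with hdq
    have h1 : Real.sinh (dist A B) * mink P A =
        Real.sinh q * mink A A + Real.sinh p * mink B A := by
      rw [mink_eq_cosh, mink_eq_cosh, mink_eq_cosh, dist_self, Real.cosh_zero,
        dist_comm P A, dist_comm B A, ← hc]
      linear_combination idA p q
    have h2 : Real.sinh (dist A B) * mink P B =
        Real.sinh q * mink A B + Real.sinh p * mink B B := by
      rw [mink_eq_cosh, mink_eq_cosh, mink_eq_cosh, dist_self, Real.cosh_zero, ← hc]
      linear_combination idB p q
    have h3 : Real.sinh (dist A B) * mink P P =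
        Real.sinh q * mink A P + Real.sinh p * mink B P := by
      rw [mink_eq_cosh, mink_eq_cosh, mink_eq_cosh, dist_self, Real.cosh_zero,
        dist_comm B P, ← hc]
      linear_combination idC p q
    obtain ⟨e1, e2, e3⟩ := dep_of_gram A B P _ _ _ h1 h2 h3
    refine ⟨Real.sinh q / Real.sinh (dist A B), Real.sinh p / Real.sinh (dist A B),
      div_ne_zero hsq.ne' hsc.ne', ?_, ?_, ?_, ?_⟩
    · have hbtw : HypBetween A P B := ⟨hc, hPA, hPB⟩
      rw [hypRatio, if_pos hbtw, ← hdp, ← hdq]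
      field_simp
    · exact div_coeff hsc.ne' e1
    · exact div_coeff hsc.ne' e2
    · exact div_coeff hsc.ne' e3
  · -- A between P and B
    rw [dist_comm P A] at hc
    have h1 : Real.sinh (dist A B) * mink P A =
        Real.sinh (dist A P + dist A B) * mink A A + (-Real.sinh (dist A P)) * mink B A := by
      rw [mink_eq_cosh, mink_eq_cosh, mink_eq_cosh, dist_self, Real.cosh_zero,
        dist_comm P A, dist_comm B A]
      linear_combination -idC (dist A P) (dist A B)
    have h2 : Real.sinh (dist A B) * mink P B =
        Real.sinh (dist A P + dist A B) * mink A B + (-Real.sinh (dist A P)) * mink B B := by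
      rw [mink_eq_cosh, mink_eq_cosh, mink_eq_cosh, dist_self, Real.cosh_zero, ← hc]
      linear_combination -idB (dist A P) (dist A B)
    have h3 : Real.sinh (dist A B) * mink P P =
        Real.sinh (dist A P + dist A B) * mink A P + (-Real.sinh (dist A P)) * mink B P := by
      rw [mink_eq_cosh, mink_eq_cosh, mink_eq_cosh, dist_self, Real.cosh_zero,
        dist_comm B P, ← hc]
      linear_combination -idA (dist A P) (dist A B)
    obtain ⟨e1, e2, e3⟩ := dep_of_gram A B P _ _ _ h1 h2 h3
    have hnb : ¬ HypBetween A P B := by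
      rintro ⟨hb, -, -⟩
      rw [← hc] at hb
      have : dist A P = 0 := by linarith
      exact absurd this hp.ne'
    refine ⟨Real.sinh (dist A P + dist A B) / Real.sinh (dist A B),
      -Real.sinh (dist A P) / Real.sinh (dist A B),
      div_ne_zero (Real.sinh_pos_iff.mpr (by linarith)).ne' hsc.ne', ?_, ?_, ?_, ?_⟩
    · rw [hypRatio, if_neg hnb, ← hc]
      have h0 : Real.sinh (dist A P + dist A B) ≠ 0 :=
        (Real.sinh_pos_iff.mpr (by linarith)).ne'
      field_simp
    · exact div_coeff hsc.ne' e1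
    · exact div_coeff hsc.ne' e2
    · exact div_coeff hsc.ne' e3
  · -- B between A and P
    rw [dist_comm B P] at hc
    have h1 : Real.sinh (dist A B) * mink P A =
        (-Real.sinh (dist P B)) * mink A A + Real.sinh (dist A B + dist P B) * mink B A := by
      rw [mink_eq_cosh, mink_eq_cosh, mink_eq_cosh, dist_self, Real.cosh_zero,
        dist_comm P A, dist_comm B A, ← hc]
      linear_combination -idA (dist A B) (dist P B)
    have h2 : Real.sinh (dist A B) * mink P B =
        (-Real.sinh (dist P B)) * mink A B + Real.sinh (dist A B + dist P B) * mink B B := by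
      rw [mink_eq_cosh, mink_eq_cosh, mink_eq_cosh, dist_self, Real.cosh_zero]
      linear_combination -idC (dist A B) (dist P B)
    have h3 : Real.sinh (dist A B) * mink P P =
        (-Real.sinh (dist P B)) * mink A P + Real.sinh (dist A B + dist P B) * mink B P := by
      rw [mink_eq_cosh, mink_eq_cosh, mink_eq_cosh, dist_self, Real.cosh_zero,
        dist_comm B P, ← hc]
      linear_combination -idB (dist A B) (dist P B)
    obtain ⟨e1, e2, e3⟩ := dep_of_gram A B P _ _ _ h1 h2 h3
    have hnb : ¬ HypBetween A P B := by
      rintro ⟨hb, -, -⟩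
      rw [← hc] at hb
      have : dist P B = 0 := by linarith
      exact absurd this hq.ne'
    refine ⟨-Real.sinh (dist P B) / Real.sinh (dist A B),
      Real.sinh (dist A B + dist P B) / Real.sinh (dist A B),
      div_ne_zero (neg_ne_zero.mpr hsq.ne') hsc.ne', ?_, ?_, ?_, ?_⟩
    · rw [hypRatio, if_neg hnb, ← hc]
      field_simp
    · exact div_coeff hsc.ne' e1
    · exact div_coeff hsc.ne' e2
    · exact div_coeff hsc.ne' e3

lemma dep_of_collinear (P Q R : ℍ) (h : HypCollinear P Q R) :
    ∃ c1 c2 c3 : ℝ, ¬ (c1 = 0 ∧ c2 = 0 ∧ c3 = 0) ∧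
      c1 * ff1 P + c2 * ff1 Q + c3 * ff1 R = 0 ∧
      c1 * ff2 P + c2 * ff2 Q + c3 * ff2 R = 0 ∧
      c1 * ff3 P + c2 * ff3 Q + c3 * ff3 R = 0 := by
  by_cases hPQ : P = Q
  · exact ⟨1, -1, 0, fun ⟨h1, _, _⟩ => one_ne_zero h1,
      by rw [hPQ]; ring, by rw [hPQ]; ring, by rw [hPQ]; ring⟩
  have hspq : Real.sinh (dist P Q) ≠ 0 :=
    (Real.sinh_pos_iff.mpr (dist_pos.mpr hPQ)).ne'
  rcases h with hc | hc | hc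
  · -- Q between P and R
    have h1 : Real.sinh (dist P R) * mink Q P =
        Real.sinh (dist Q R) * mink P P + Real.sinh (dist P Q) * mink R P := by
      rw [mink_eq_cosh, mink_eq_cosh, mink_eq_cosh, dist_self, Real.cosh_zero,
        dist_comm Q P, dist_comm R P, ← hc]
      linear_combination idA (dist P Q) (dist Q R)
    have h2 : Real.sinh (dist P R) * mink Q R =
        Real.sinh (dist Q R) * mink P R + Real.sinh (dist P Q) * mink R R := by
      rw [mink_eq_cosh, mink_eq_cosh, mink_eq_cosh, dist_self, Real.cosh_zero, ← hc]
      linear_combination idB (dist P Q) (dist Q R)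
    have h3 : Real.sinh (dist P R) * mink Q Q =
        Real.sinh (dist Q R) * mink P Q + Real.sinh (dist P Q) * mink R Q := by
      rw [mink_eq_cosh, mink_eq_cosh, mink_eq_cosh, dist_self, Real.cosh_zero,
        dist_comm R Q, ← hc]
      linear_combination idC (dist P Q) (dist Q R)
    obtain ⟨e1, e2, e3⟩ := dep_of_gram P R Q _ _ _ h1 h2 h3
    exact ⟨Real.sinh (dist Q R), -Real.sinh (dist P R), Real.sinh (dist P Q),
      fun ⟨_, _, h3'⟩ => hspq h3',
      by linear_combination -e1, by linear_combination -e2, by linear_combination -e3⟩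
  · -- P between Q and R
    have h1 : Real.sinh (dist Q R) * mink P Q =
        Real.sinh (dist P R) * mink Q Q + Real.sinh (dist Q P) * mink R Q := by
      rw [mink_eq_cosh, mink_eq_cosh, mink_eq_cosh, dist_self, Real.cosh_zero,
        dist_comm P Q, dist_comm R Q, ← hc]
      linear_combination idA (dist Q P) (dist P R)
    have h2 : Real.sinh (dist Q R) * mink P R =
        Real.sinh (dist P R) * mink Q R + Real.sinh (dist Q P) * mink R R := by
      rw [mink_eq_cosh, mink_eq_cosh, mink_eq_cosh, dist_self, Real.cosh_zero, ← hc]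
      linear_combination idB (dist Q P) (dist P R)
    have h3 : Real.sinh (dist Q R) * mink P P =
        Real.sinh (dist P R) * mink Q P + Real.sinh (dist Q P) * mink R P := by
      rw [mink_eq_cosh, mink_eq_cosh, mink_eq_cosh, dist_self, Real.cosh_zero,
        dist_comm R P, ← hc]
      linear_combination idC (dist Q P) (dist P R)
    obtain ⟨e1, e2, e3⟩ := dep_of_gram Q R P _ _ _ h1 h2 h3
    have hQP : Real.sinh (dist Q P) ≠ 0 := by rwa [dist_comm Q P]
    exact ⟨-Real.sinh (dist Q R), Real.sinh (dist P R), Real.sinh (dist Q P),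
      fun ⟨_, _, h3'⟩ => hQP h3',
      by linear_combination -e1, by linear_combination -e2, by linear_combination -e3⟩
  · -- R between P and Q
    have h1 : Real.sinh (dist P Q) * mink R P =
        Real.sinh (dist R Q) * mink P P + Real.sinh (dist P R) * mink Q P := by
      rw [mink_eq_cosh, mink_eq_cosh, mink_eq_cosh, dist_self, Real.cosh_zero,
        dist_comm R P, dist_comm Q P, ← hc]
      linear_combination idA (dist P R) (dist R Q)
    have h2 : Real.sinh (dist P Q) * mink R Q =
        Real.sinh (dist R Q) * mink P Q + Real.sinh (dist P R) * mink Q Q := by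
      rw [mink_eq_cosh, mink_eq_cosh, mink_eq_cosh, dist_self, Real.cosh_zero, ← hc]
      linear_combination idB (dist P R) (dist R Q)
    have h3 : Real.sinh (dist P Q) * mink R R =
        Real.sinh (dist R Q) * mink P R + Real.sinh (dist P R) * mink Q R := by
      rw [mink_eq_cosh, mink_eq_cosh, mink_eq_cosh, dist_self, Real.cosh_zero,
        dist_comm Q R, ← hc]
      linear_combination idC (dist P R) (dist R Q)
    obtain ⟨e1, e2, e3⟩ := dep_of_gram P Q R _ _ _ h1 h2 h3
    exact ⟨Real.sinh (dist R Q), Real.sinh (dist P R), -Real.sinh (dist P Q),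
      fun ⟨_, _, h3'⟩ => hspq (neg_eq_zero.mp h3'),
      by linear_combination -e1, by linear_combination -e2, by linear_combination -e3⟩

/-- **Menelaus' theorem in the hyperbolic plane.** -/
theorem hyperbolic_menelaus
    (A B C : UpperHalfPlane) (hABC : ¬ HypCollinear A B C)
    (P Q R : UpperHalfPlane)
    (hPA : P ≠ A) (hPB : P ≠ B) (hPC : P ≠ C)
    (hQA : Q ≠ A) (hQB : Q ≠ B) (hQC : Q ≠ C)
    (hRA : R ≠ A) (hRB : R ≠ B) (hRC : R ≠ C)
    (hP : HypCollinear A P B) (hQ : HypCollinear B Q C) (hR : HypCollinear C R A)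
    (hPQR : HypCollinear P Q R) :
    hypRatio A P B * hypRatio B Q C * hypRatio C R A = -1 := by
  have hAB : A ≠ B := by
    rintro rfl
    exact hABC (Or.inl (by rw [dist_self, zero_add]))
  have hBC : B ≠ C := by
    rintro rfl
    exact hABC (Or.inr (Or.inr (by rw [dist_self, add_zero])))
  have hCA : C ≠ A := by
    rintro rfl
    exact hABC (Or.inr (Or.inl (by rw [dist_self, add_zero])))
  obtain ⟨α, β, hα, hβ, p1, p2, p3⟩ := side_coeffs A B P hAB hPA hPB hP
  obtain ⟨γ, δ, hγ, hδ, q1, q2, q3⟩ := side_coeffs B C Q hBC hQB hQC hQ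
  obtain ⟨ε, ζ, hε, hζ, r1, r2, r3⟩ := side_coeffs C A R hCA hRC hRA hR
  obtain ⟨c1, c2, c3, hne, g1, g2, g3⟩ := dep_of_collinear P Q R hPQR
  have k1 : (c1 * α + c3 * ζ) * ff1 A + (c1 * β + c2 * γ) * ff1 B
      + (c2 * δ + c3 * ε) * ff1 C = 0 := by
    linear_combination g1 - c1 * p1 - c2 * q1 - c3 * r1
  have k2 : (c1 * α + c3 * ζ) * ff2 A + (c1 * β + c2 * γ) * ff2 B
      + (c2 * δ + c3 * ε) * ff2 C = 0 := by
    linear_combination g2 - c1 * p2 - c2 * q2 - c3 * r2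
  have k3 : (c1 * α + c3 * ζ) * ff3 A + (c1 * β + c2 * γ) * ff3 B
      + (c2 * δ + c3 * ε) * ff3 C = 0 := by
    linear_combination g3 - c1 * p3 - c2 * q3 - c3 * r3
  obtain ⟨z1, z2, z3⟩ := indep A B C hABC _ _ _ k1 k2 k3
  have hr1 : hypRatio A P B ≠ 0 := hypRatio_ne_zero A P B hPA hPB
  have hr2 : hypRatio B Q C ≠ 0 := hypRatio_ne_zero B Q C hQB hQC
  have hr3 : hypRatio C R A ≠ 0 := hypRatio_ne_zero C R A hRC hRA
  have hβ0 : β ≠ 0 := by rw [hβ]; exact mul_ne_zero hr1 hα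
  have hδ0 : δ ≠ 0 := by rw [hδ]; exact mul_ne_zero hr2 hγ
  have hζ0 : ζ ≠ 0 := by rw [hζ]; exact mul_ne_zero hr3 hε
  have hc1 : c1 ≠ 0 := by
    intro h0
    have h3' : c3 = 0 := by
      have : c3 * ζ = 0 := by rw [h0] at z1; linarith
      exact (mul_eq_zero.mp this).resolve_right hζ0
    have h2' : c2 = 0 := by
      have : c2 * γ = 0 := by rw [h0] at z2; linarith
      exact (mul_eq_zero.mp this).resolve_right hγ
    exact hne ⟨h0, h2', h3'⟩
  have hc2 : c2 ≠ 0 := by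
    intro h0
    apply hc1
    have : c1 * β = 0 := by rw [h0] at z2; linarith
    exact (mul_eq_zero.mp this).resolve_right hβ0
  have hc3 : c3 ≠ 0 := by
    intro h0
    apply hc1
    have : c1 * α = 0 := by rw [h0] at z1; linarith
    exact (mul_eq_zero.mp this).resolve_right hα
  -- now the algebra
  rw [hβ] at z2
  rw [hδ] at z3
  rw [hζ] at z1
  set R1 := hypRatio A P B
  set R2 := hypRatio B Q C
  set R3 := hypRatio C R A
  have key : (R1 * R2 * R3 + 1) * (c1 * α * (c2 * γ) * (c3 * ε)) = 0 := by
    linear_combination (R2 * R3 * (c2 * γ) * (c3 * ε)) * z2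
      - (R3 * (c2 * γ) * (c3 * ε)) * z3 + ((c2 * γ) * (c3 * ε)) * z1
  have hnz : c1 * α * (c2 * γ) * (c3 * ε) ≠ 0 :=
    mul_ne_zero (mul_ne_zero (mul_ne_zero hc1 hα) (mul_ne_zero hc2 hγ))
      (mul_ne_zero hc3 hε)
  have := (mul_eq_zero.mp key).resolve_right hnz
  linarith
end

section
/- (Ceva's theorem in the hyperbolic plane.) Let A, B, C be three points of the hyperbolic plane ℍ not lying on a common geodesic, and let T ∈ ℍ be a point not collinear with any two of A, B, C. Let P, Q, R ∈ ℍ, none equal to any of A, B, C, be such that Q is collinear with A and T and also collinear with B and C; R is collinear with B and T and also collinear with C and A; and P is collinear with C and T and also collinear with A and B. Then s(A,P,B) · s(B,Q,C) · s(C,R,A) = 1, where s denotes the signed hyperbolic simple ratio. -/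
open Real Classical

/-! ### Auxiliary: the hyperboloid (Minkowski) model -/

/-- Embedding of the upper half-plane into the hyperboloid in Minkowski 3-space. -/
noncomputable def hV (z : UpperHalfPlane) : Fin 3 → ℝ :=
  ![(z.re ^ 2 + z.im ^ 2 + 1) / (2 * z.im), z.re / z.im, (z.re ^ 2 + z.im ^ 2 - 1) / (2 * z.im)]

/-- The Minkowski bilinear form on ℝ³. -/
def hB (u v : Fin 3 → ℝ) : ℝ := u 0 * v 0 - u 1 * v 1 - u 2 * v 2

/-- Explicit 3×3 determinant. -/
def hdet (u v w : Fin 3 → ℝ) : ℝ :=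
  u 0 * v 1 * w 2 - u 0 * v 2 * w 1 - u 1 * v 0 * w 2 +
  u 1 * v 2 * w 0 + u 2 * v 0 * w 1 - u 2 * v 1 * w 0

theorem hB_dist (z w : UpperHalfPlane) : hB (hV z) (hV w) = Real.cosh (dist z w) := by
  rw [UpperHalfPlane.cosh_dist]
  have hz := z.im_ne_zero
  have hw := w.im_ne_zero
  simp only [hB, hV, Complex.dist_eq, Complex.sq_norm, Complex.normSq_sub, Complex.normSq_apply,
    Matrix.cons_val_zero, Matrix.cons_val_one, Matrix.head_cons, Matrix.cons_val_two,
    Matrix.tail_cons, Complex.sub_re, Complex.sub_im, UpperHalfPlane.coe_re, UpperHalfPlane.coe_im]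
  field_simp
  ring

theorem hB_self (z : UpperHalfPlane) : hB (hV z) (hV z) = 1 := by
  rw [hB_dist, dist_self, Real.cosh_zero]

theorem hB_null (d u : Fin 3 → ℝ) (hu : hB u u = 1) (h1 : hB d u = 0) (h2 : hB d d = 0) :
    d = 0 := by
  simp only [hB] at hu h1 h2
  have key : d 0 ^ 2 + (d 1 * u 2 - d 2 * u 1) ^ 2 = 0 := by
    linear_combination (d 0 * u 0 + d 1 * u 1 + d 2 * u 2) * h1 - d 0 ^ 2 * hu -
      (u 1 ^ 2 + u 2 ^ 2) * h2
  have h0 : d 0 = 0 := by nlinarith [sq_nonneg (d 0), sq_nonneg (d 1 * u 2 - d 2 * u 1)]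
  have hd1 : d 1 = 0 := by nlinarith [sq_nonneg (d 1), sq_nonneg (d 2)]
  have hd2 : d 2 = 0 := by nlinarith [sq_nonneg (d 1), sq_nonneg (d 2)]
  funext i
  fin_cases i <;> simp [h0, hd1, hd2]

/-- If `Y` lies metrically between `X` and `Z`, the hyperboloid vectors satisfy an
explicit linear relation. -/
theorem between_rel (X Y Z : UpperHalfPlane)
    (h : dist X Y + dist Y Z = dist X Z) :
    Real.sinh (dist X Z) • hV Y = Real.sinh (dist Y Z) • hV X + Real.sinh (dist X Y) • hV Z := by
  set a := dist X Y with ha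
  set b := dist Y Z with hb
  set d : Fin 3 → ℝ :=
    Real.sinh (dist X Z) • hV Y - (Real.sinh b • hV X + Real.sinh a • hV Z) with hd
  have hXZ : dist X Z = a + b := h.symm
  have e1 : hB (hV X) (hV Y) = Real.cosh a := hB_dist X Y
  have e2 : hB (hV Y) (hV Z) = Real.cosh b := hB_dist Y Z
  have e3 : hB (hV X) (hV Z) = Real.cosh (a + b) := by rw [hB_dist, hXZ]
  have eX : hB (hV X) (hV X) = 1 := hB_self X
  have eY : hB (hV Y) (hV Y) = 1 := hB_self Y
  have eZ : hB (hV Z) (hV Z) = 1 := hB_self Z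
  have ca : Real.cosh a ^ 2 = 1 + Real.sinh a ^ 2 := by
    rw [Real.cosh_sq]; ring
  have cb : Real.cosh b ^ 2 = 1 + Real.sinh b ^ 2 := by
    rw [Real.cosh_sq]; ring
  simp only [hB] at e1 e2 e3 eX eY eZ
  have hdY : hB d (hV Y) = 0 := by
    simp only [hd, hXZ, hB, Pi.sub_apply, Pi.add_apply, Pi.smul_apply, smul_eq_mul]
    rw [Real.sinh_add]
    linear_combination (Real.sinh a * Real.cosh b + Real.cosh a * Real.sinh b) * eY
      - Real.sinh b * e1 - Real.sinh a * e2
  have hdd : hB d d = 0 := by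
    simp only [hd, hXZ, hB, Pi.sub_apply, Pi.add_apply, Pi.smul_apply, smul_eq_mul]
    rw [Real.sinh_add] at *
    rw [Real.cosh_add] at e3
    linear_combination (Real.sinh a * Real.cosh b + Real.cosh a * Real.sinh b) ^ 2 * eY
      + Real.sinh b ^ 2 * eX + Real.sinh a ^ 2 * eZ
      - 2 * (Real.sinh a * Real.cosh b + Real.cosh a * Real.sinh b) * Real.sinh b * e1
      - 2 * (Real.sinh a * Real.cosh b + Real.cosh a * Real.sinh b) * Real.sinh a * e2
      + 2 * Real.sinh a * Real.sinh b * e3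
      - Real.sinh b ^ 2 * ca - Real.sinh a ^ 2 * cb
  have h0 : Real.sinh (dist X Z) • hV Y - (Real.sinh b • hV X + Real.sinh a • hV Z) = 0 :=
    hB_null d (hV Y) (by simpa only [hB] using eY) hdY hdd
  have := sub_eq_zero.mp h0
  simpa using this

/-- Linear dependence of hyperboloid vectors implies metric collinearity. -/
theorem dep_collinear (X Y Z : UpperHalfPlane) (μ ν : ℝ)
    (h : hV Z = μ • hV X + ν • hV Y) : HypCollinear X Y Z := by
  have e1 := hB_dist X Y
  have eX := hB_dist X X
  have eY := hB_dist Y Y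
  rw [dist_self, Real.cosh_zero] at eX eY
  simp only [hB] at e1 eX eY
  set u := Real.cosh (dist X Y) with hu
  set s := Real.sinh (dist X Y) with hs
  have hu2 : u ^ 2 = 1 + s ^ 2 := by rw [hu, hs, Real.cosh_sq]; ring
  have hA : Real.cosh (dist X Z) = μ + ν * u := by
    rw [← hB_dist X Z]
    simp only [hB, h, Pi.add_apply, Pi.smul_apply, smul_eq_mul]
    linear_combination μ * eX + ν * e1
  have hBc : Real.cosh (dist Y Z) = μ * u + ν := by
    rw [← hB_dist Y Z]
    simp only [hB, h, Pi.add_apply, Pi.smul_apply, smul_eq_mul]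
    linear_combination μ * e1 + ν * eY
  have hN : μ * Real.cosh (dist X Z) + ν * Real.cosh (dist Y Z) = 1 := by
    have eZZ := hB_dist Z Z
    rw [dist_self, Real.cosh_zero] at eZZ
    simp only [hB] at eZZ
    have e3' := hB_dist X Z
    have e2' := hB_dist Y Z
    simp only [hB] at e3' e2'
    rw [← e3', ← e2']
    have hz := congrFun h
    simp only [Pi.add_apply, Pi.smul_apply, smul_eq_mul] at hz
    have h0 := hz 0; have h1 := hz 1; have h2 := hz 2
    linear_combination (-(hV Z 0)) * h0 + (hV Z 1) * h1 + (hV Z 2) * h2 + eZZ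
  have hsXZ : Real.sinh (dist X Z) = |ν| * s := by
    rw [← sq_eq_sq₀ (Real.sinh_nonneg_iff.2 dist_nonneg)
      (mul_nonneg (abs_nonneg ν) (Real.sinh_nonneg_iff.2 dist_nonneg))]
    have : Real.sinh (dist X Z) ^ 2 = Real.cosh (dist X Z) ^ 2 - 1 := by
      rw [Real.cosh_sq]; ring
    rw [this, hA, mul_pow, sq_abs]
    rw [hA, hBc] at hN
    linear_combination hN + ν ^ 2 * hu2
  have hsYZ : Real.sinh (dist Y Z) = |μ| * s := by
    rw [← sq_eq_sq₀ (Real.sinh_nonneg_iff.2 dist_nonneg)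
      (mul_nonneg (abs_nonneg μ) (Real.sinh_nonneg_iff.2 dist_nonneg))]
    have : Real.sinh (dist Y Z) ^ 2 = Real.cosh (dist Y Z) ^ 2 - 1 := by
      rw [Real.cosh_sq]; ring
    rw [this, hBc, mul_pow, sq_abs]
    rw [hA, hBc] at hN
    linear_combination hN + μ ^ 2 * hu2
  rw [hA, hBc] at hN
  rcases le_or_gt 0 (μ * ν) with hmn | hmn
  · right; right
    have key : Real.cosh (dist X Z + dist Z Y) = Real.cosh (dist X Y) := by
      rw [Real.cosh_add, dist_comm Z Y, hA, hBc, hsXZ, hsYZ, ← hu]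
      have habs : |ν| * s * (|μ| * s) = μ * ν * s ^ 2 := by
        rw [show |ν| * s * (|μ| * s) = |μ * ν| * s ^ 2 by rw [abs_mul]; ring,
          abs_of_nonneg hmn]
      rw [habs]
      linear_combination (u : ℝ) * hN - μ * ν * hu2
    exact Real.cosh_strictMonoOn.injOn (by simp [Set.mem_Ici]; positivity)
      (by simp [Set.mem_Ici]) key
  · have key : Real.cosh (dist X Z - dist Y Z) = Real.cosh (dist X Y) := by
      rw [Real.cosh_sub, hA, hBc, hsXZ, hsYZ, ← hu]
      have habs : |ν| * s * (|μ| * s) = -(μ * ν) * s ^ 2 := by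
        rw [show |ν| * s * (|μ| * s) = |μ * ν| * s ^ 2 by rw [abs_mul]; ring,
          abs_of_neg hmn]
      rw [habs]
      linear_combination (u : ℝ) * hN - μ * ν * hu2
    rw [← Real.cosh_abs] at key
    have habs : |dist X Z - dist Y Z| = dist X Y :=
      Real.cosh_strictMonoOn.injOn (by simp [Set.mem_Ici, abs_nonneg])
        (by simp [Set.mem_Ici, dist_nonneg]) key
    rcases (abs_eq (dist_nonneg (x := X) (y := Y))).mp habs with h' | h'
    · left; linarith [dist_comm Y Z (α := UpperHalfPlane)]
    · right; left
      linarith [dist_comm Y X (α := UpperHalfPlane), dist_comm X Y (α := UpperHalfPlane)]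

theorem hdet_eq (u v w : Fin 3 → ℝ) : (Matrix.of ![u, v, w]).det = hdet u v w := by
  rw [Matrix.det_fin_three]
  simp [hdet, Matrix.of_apply]

theorem hdet_zero_of_dep (u v w : Fin 3 → ℝ)
    (h : ∃ c : Fin 3 → ℝ, c ≠ 0 ∧ c 0 • u + c 1 • v + c 2 • w = 0) :
    hdet u v w = 0 := by
  rw [← hdet_eq, ← Matrix.exists_vecMul_eq_zero_iff]
  obtain ⟨c, hc, hcc⟩ := h
  refine ⟨c, hc, ?_⟩
  funext j
  have := congrFun hcc j
  simp only [Pi.add_apply, Pi.smul_apply, smul_eq_mul, Pi.zero_apply] at this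
  simp [Matrix.vecMul, dotProduct, Fin.sum_univ_three, Matrix.of_apply]
  linarith

theorem hdet_dep_of_zero (u v w : Fin 3 → ℝ) (h : hdet u v w = 0) :
    ∃ c : Fin 3 → ℝ, c ≠ 0 ∧ c 0 • u + c 1 • v + c 2 • w = 0 := by
  rw [← hdet_eq, ← Matrix.exists_vecMul_eq_zero_iff] at h
  obtain ⟨c, hc, hcc⟩ := h
  refine ⟨c, hc, ?_⟩
  funext j
  have := congrFun hcc j
  simp only [Matrix.vecMul, dotProduct, Fin.sum_univ_three, Matrix.of_apply,
    Matrix.cons_val', Matrix.cons_val_zero, Matrix.cons_val_one, Matrix.head_cons,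
    Matrix.empty_val', Matrix.cons_val_fin_one, Matrix.head_fin_const, Pi.zero_apply] at this
  simp only [Pi.add_apply, Pi.smul_apply, smul_eq_mul, Pi.zero_apply]
  fin_cases j <;> simp_all

theorem hc_swap₁ {X Y Z : UpperHalfPlane} (h : HypCollinear X Y Z) : HypCollinear Y X Z := by
  rcases h with h | h | h
  · exact Or.inr (Or.inl h)
  · exact Or.inl h
  · exact Or.inr (Or.inr (by
      have c1 := dist_comm Y Z (α := UpperHalfPlane)
      have c2 := dist_comm Z X (α := UpperHalfPlane)
      have c3 := dist_comm Y X (α := UpperHalfPlane)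
      have c4 := dist_comm X Y (α := UpperHalfPlane)
      have c5 := dist_comm Z Y (α := UpperHalfPlane)
      linarith))

theorem hc_swap₂ {X Y Z : UpperHalfPlane} (h : HypCollinear X Y Z) : HypCollinear X Z Y := by
  rcases h with h | h | h
  · exact Or.inr (Or.inr h)
  · refine Or.inr (Or.inl ?_)
    have c1 := dist_comm Z X (α := UpperHalfPlane)
    have c2 := dist_comm X Z (α := UpperHalfPlane)
    have c3 := dist_comm Y X (α := UpperHalfPlane)
    have c4 := dist_comm Z Y (α := UpperHalfPlane)
    linarith
  · exact Or.inl h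

theorem hc_eq12 {X Y Z : UpperHalfPlane} (h : X = Y) : HypCollinear X Y Z := by
  subst h; exact Or.inl (by simp)

theorem hc_eq23 {X Y Z : UpperHalfPlane} (h : Y = Z) : HypCollinear X Y Z := by
  subst h; exact Or.inl (by simp)

theorem hc_eq13 {X Y Z : UpperHalfPlane} (h : X = Z) : HypCollinear X Y Z := by
  subst h; exact Or.inr (Or.inr (by simp [dist_comm]))

theorem hsinh_pos {X Y : UpperHalfPlane} (h : X ≠ Y) : 0 < Real.sinh (dist X Y) :=
  Real.sinh_pos_iff.2 (dist_pos.2 h)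

/-- Metric collinearity implies that the hyperboloid vectors have vanishing determinant. -/
theorem hc_det {X Y Z : UpperHalfPlane} (h : HypCollinear X Y Z) :
    hdet (hV X) (hV Y) (hV Z) = 0 := by
  rcases h with h | h | h
  · by_cases hXY : X = Y
    · subst hXY; simp [hdet]; ring
    · have rel := between_rel X Y Z h
      apply hdet_zero_of_dep
      refine ⟨![-Real.sinh (dist Y Z), Real.sinh (dist X Z), -Real.sinh (dist X Y)], ?_, ?_⟩
      · intro hc
        have := congrFun hc 2
        simp at this
        exact hXY this
      · funext i
        have hri := congrFun rel i
        simp only [Matrix.cons_val_zero, Matrix.cons_val_one, Matrix.head_cons,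
          Matrix.cons_val_two, Matrix.tail_cons, Pi.add_apply, Pi.smul_apply, smul_eq_mul,
          Pi.zero_apply, neg_mul, Pi.neg_apply, neg_smul] at hri ⊢
        linarith
  · by_cases hYX : Y = X
    · subst hYX; simp [hdet]; ring
    · have rel := between_rel Y X Z h
      apply hdet_zero_of_dep
      refine ⟨![Real.sinh (dist Y Z), -Real.sinh (dist X Z), -Real.sinh (dist Y X)], ?_, ?_⟩
      · intro hc
        have := congrFun hc 2
        simp at this
        exact hYX this
      · funext i
        have hri := congrFun rel i
        simp only [Matrix.cons_val_zero, Matrix.cons_val_one, Matrix.head_cons,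
          Matrix.cons_val_two, Matrix.tail_cons, Pi.add_apply, Pi.smul_apply, smul_eq_mul,
          Pi.zero_apply, neg_mul, Pi.neg_apply, neg_smul] at hri ⊢
        linarith
  · by_cases hXZ : X = Z
    · subst hXZ; simp [hdet]; ring
    · have rel := between_rel X Z Y h
      apply hdet_zero_of_dep
      refine ⟨![-Real.sinh (dist Z Y), -Real.sinh (dist X Z), Real.sinh (dist X Y)], ?_, ?_⟩
      · intro hc
        have := congrFun hc 1
        simp at this
        exact hXZ this
      · funext i
        have hri := congrFun rel i
        simp only [Matrix.cons_val_zero, Matrix.cons_val_one, Matrix.head_cons,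
          Matrix.cons_val_two, Matrix.tail_cons, Pi.add_apply, Pi.smul_apply, smul_eq_mul,
          Pi.zero_apply, neg_mul, Pi.neg_apply, neg_smul] at hri ⊢
        linarith

/-- Non-collinear points have nonvanishing determinant. -/
theorem notcol_det {X Y Z : UpperHalfPlane} (h : ¬ HypCollinear X Y Z) :
    hdet (hV X) (hV Y) (hV Z) ≠ 0 := by
  intro h0
  apply h
  obtain ⟨c, hc, hrel⟩ := hdet_dep_of_zero _ _ _ h0
  by_cases h2 : c 2 ≠ 0
  · have : hV Z = (-(c 0) / c 2) • hV X + (-(c 1) / c 2) • hV Y := by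
      funext i
      have := congrFun hrel i
      simp only [Pi.add_apply, Pi.smul_apply, smul_eq_mul, Pi.zero_apply] at this ⊢
      rw [div_mul_eq_mul_div, div_mul_eq_mul_div, ← add_div, eq_div_iff h2]
      linarith
    exact dep_collinear X Y Z _ _ this
  · push_neg at h2
    by_cases h1 : c 1 ≠ 0
    · have : hV Y = (-(c 0) / c 1) • hV X + (0 : ℝ) • hV Z := by
        funext i
        have := congrFun hrel i
        simp only [Pi.add_apply, Pi.smul_apply, smul_eq_mul, Pi.zero_apply, h2] at this ⊢
        rw [zero_mul, add_zero, div_mul_eq_mul_div, eq_div_iff h1]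
        linarith
      exact hc_swap₂ (dep_collinear X Z Y _ _ this)
    · push_neg at h1
      have h0' : c 0 ≠ 0 := by
        intro h0'
        apply hc
        funext i
        fin_cases i <;> simp [h0', h1, h2]
      have hX0 : hV X = 0 := by
        funext i
        have := congrFun hrel i
        simp only [Pi.add_apply, Pi.smul_apply, smul_eq_mul, Pi.zero_apply, h1, h2] at this
        have : c 0 * hV X i = 0 := by linarith
        simpa [Pi.zero_apply] using (mul_eq_zero.mp this).resolve_left h0'
      have := hB_self X
      rw [hX0] at this
      simp [hB] at this

/-- `X`, `P`, `Y` collinear: `hV P` is a combination of `hV X`, `hV Y`, with the signed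
ratio equal to the quotient of coefficients. -/
theorem ratio_rep (X P Y : UpperHalfPlane) (hXY : X ≠ Y) (hPX : P ≠ X) (hPY : P ≠ Y)
    (hc : HypCollinear X P Y) :
    ∃ α β : ℝ, α ≠ 0 ∧ hV P = α • hV X + β • hV Y ∧ hypRatio X P Y = β / α := by
  have hs : Real.sinh (dist X Y) ≠ 0 := (hsinh_pos hXY).ne'
  have hsPY : Real.sinh (dist P Y) ≠ 0 := (hsinh_pos hPY).ne'
  have hsXP : Real.sinh (dist X P) ≠ 0 := (hsinh_pos (fun hxp => hPX hxp.symm)).ne'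
  have combo : ∀ c1 c2 : ℝ, Real.sinh (dist X Y) • hV P = c1 • hV X + c2 • hV Y →
      hV P = (c1 / Real.sinh (dist X Y)) • hV X + (c2 / Real.sinh (dist X Y)) • hV Y := by
    intro c1 c2 hrel
    funext i
    have := congrFun hrel i
    simp only [Pi.add_apply, Pi.smul_apply, smul_eq_mul] at this ⊢
    field_simp
    linarith
  rcases hc with h | h | h
  · -- P strictly between X and Y
    have rel := between_rel X P Y h
    have hbet : HypBetween X P Y := ⟨h, hPX, hPY⟩
    refine ⟨Real.sinh (dist P Y) / Real.sinh (dist X Y),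
      Real.sinh (dist X P) / Real.sinh (dist X Y), ?_, combo _ _ rel, ?_⟩
    · exact div_ne_zero hsPY hs
    · rw [hypRatio, if_pos hbet]
      field_simp
  · -- X strictly between P and Y
    have rel := between_rel P X Y h
    have rel2 : Real.sinh (dist X Y) • hV P
        = Real.sinh (dist P Y) • hV X + (-Real.sinh (dist P X)) • hV Y := by
      funext i
      have hri := congrFun rel i
      simp only [Pi.add_apply, Pi.smul_apply, smul_eq_mul, neg_mul, Pi.neg_apply,
        neg_smul] at hri ⊢
      linarith
    have hnb : ¬ HypBetween X P Y := by
      rintro ⟨hb, -, -⟩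
      have c1 := dist_comm X P (α := UpperHalfPlane)
      have hd0 : dist P X = 0 := by linarith
      exact hPX (dist_eq_zero.mp hd0)
    refine ⟨Real.sinh (dist P Y) / Real.sinh (dist X Y),
      -Real.sinh (dist P X) / Real.sinh (dist X Y), ?_, combo _ _ rel2, ?_⟩
    · exact div_ne_zero hsPY hs
    · rw [hypRatio, if_neg hnb, dist_comm X P]
      field_simp
  · -- Y strictly between X and P
    have rel := between_rel X Y P h
    have rel2 : Real.sinh (dist X Y) • hV P
        = (-Real.sinh (dist Y P)) • hV X + Real.sinh (dist X P) • hV Y := by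
      funext i
      have hri := congrFun rel i
      simp only [Pi.add_apply, Pi.smul_apply, smul_eq_mul, neg_mul, Pi.neg_apply,
        neg_smul] at hri ⊢
      linarith
    have hnb : ¬ HypBetween X P Y := by
      rintro ⟨hb, -, -⟩
      have c1 := dist_comm Y P (α := UpperHalfPlane)
      have hd0 : dist P Y = 0 := by linarith
      exact hPY (dist_eq_zero.mp hd0)
    refine ⟨-Real.sinh (dist Y P) / Real.sinh (dist X Y),
      Real.sinh (dist X P) / Real.sinh (dist X Y), ?_, combo _ _ rel2, ?_⟩
    · have : Real.sinh (dist Y P) ≠ 0 := (hsinh_pos (fun hyp => hPY hyp.symm)).ne'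
      exact div_ne_zero (neg_ne_zero.mpr this) hs
    · rw [hypRatio, if_neg hnb, dist_comm P Y]
      have hsYP : Real.sinh (dist Y P) ≠ 0 := (hsinh_pos (fun hyp => hPY hyp.symm)).ne'
      field_simp

/-- **Ceva's theorem in the hyperbolic plane.** -/
theorem hyperbolic_ceva
    (A B C : UpperHalfPlane) (hABC : ¬ HypCollinear A B C)
    (T : UpperHalfPlane)
    (hTAB : ¬ HypCollinear A B T) (hTBC : ¬ HypCollinear B C T)
    (hTCA : ¬ HypCollinear C A T)
    (P Q R : UpperHalfPlane)
    (hPA : P ≠ A) (hPB : P ≠ B) (hPC : P ≠ C)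
    (hQA : Q ≠ A) (hQB : Q ≠ B) (hQC : Q ≠ C)
    (hRA : R ≠ A) (hRB : R ≠ B) (hRC : R ≠ C)
    (hQ₁ : HypCollinear A T Q) (hQ₂ : HypCollinear B Q C)
    (hR₁ : HypCollinear B T R) (hR₂ : HypCollinear C R A)
    (hP₁ : HypCollinear C T P) (hP₂ : HypCollinear A P B) :
    hypRatio A P B * hypRatio B Q C * hypRatio C R A = 1 := by
  have hAB : A ≠ B := fun h => hABC (hc_eq12 h)
  have hBC : B ≠ C := fun h => hABC (hc_eq23 h)
  have hCA : C ≠ A := fun h => hABC (hc_eq13 h.symm)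
  obtain ⟨α, β, hα, hp, hr1⟩ := ratio_rep A P B hAB hPA hPB hP₂
  obtain ⟨γ, δ, hγ, hq, hr2⟩ := ratio_rep B Q C hBC hQB hQC hQ₂
  obtain ⟨ε, ζ, hε, hr, hr3⟩ := ratio_rep C R A hCA hRC hRA hR₂
  have dCP : hdet (hV C) (hV T) (hV P) = 0 := hc_det hP₁
  have dAQ : hdet (hV A) (hV T) (hV Q) = 0 := hc_det hQ₁
  have dBR : hdet (hV B) (hV T) (hV R) = 0 := hc_det hR₁
  set Xd := hdet (hV T) (hV B) (hV C) with hXd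
  set Yd := hdet (hV A) (hV T) (hV C) with hYd
  set Zd := hdet (hV A) (hV B) (hV T) with hZd
  have nX : Xd ≠ 0 := notcol_det (fun h => hTBC (hc_swap₂ (hc_swap₁ h)))
  have nY : Yd ≠ 0 := notcol_det (fun h => hTCA (hc_swap₁ (hc_swap₂ h)))
  have nZ : Zd ≠ 0 := notcol_det hTAB
  have key1 : β * Xd - α * Yd = 0 := by
    rw [hp] at dCP
    simp only [hXd, hYd, hdet, Pi.add_apply, Pi.smul_apply, smul_eq_mul] at dCP ⊢
    linear_combination dCP
  have key2 : δ * Yd - γ * Zd = 0 := by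
    rw [hq] at dAQ
    simp only [hYd, hZd, hdet, Pi.add_apply, Pi.smul_apply, smul_eq_mul] at dAQ ⊢
    linear_combination dAQ
  have key3 : ζ * Zd - ε * Xd = 0 := by
    rw [hr] at dBR
    simp only [hXd, hZd, hdet, Pi.add_apply, Pi.smul_apply, smul_eq_mul] at dBR ⊢
    linear_combination dBR
  have hne : Xd * Yd * Zd ≠ 0 := mul_ne_zero (mul_ne_zero nX nY) nZ
  have h4 : β * δ * ζ * (Xd * Yd * Zd) = α * γ * ε * (Xd * Yd * Zd) := by
    linear_combination (δ * Yd * ζ * Zd) * key1 + (α * Yd * ζ * Zd) * key2 +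
      (α * Yd * γ * Zd) * key3
  have hprod : β * δ * ζ = α * γ * ε := mul_right_cancel₀ hne h4
  rw [hr1, hr2, hr3]
  field_simp
  linear_combination hprod
end

section
/- (Spherical Menelaus' theorem, unsigned form.) Let A, B, C be linearly independent unit vectors in EuclideanSpace ℝ (Fin 3). Let P, Q, R be unit vectors with P ∈ span ℝ {A, B}, Q ∈ span ℝ {B, C}, R ∈ span ℝ {C, A}, such that P ∉ {A, −A, B, −B}, Q ∉ {B, −B, C, −C}, R ∉ {C, −C, A, −A}. If P, Q, R are linearly dependent (i.e., lie on a common great circle), then sin ∠(A,P) · sin ∠(B,Q) · sin ∠(C,R) = sin ∠(P,B) · sin ∠(Q,C) · sin ∠(R,A), where ∠(X,Y) denotes the angle between the vectors X and Y (the spherical distance between the corresponding points of the unit sphere). -/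
open InnerProductGeometry RealInnerProductSpace


private lemma sin_angle_aux {A B X : EuclideanSpace ℝ (Fin 3)}
    (hA : ‖A‖ = 1) (hB : ‖B‖ = 1) (hX : ‖X‖ = 1) (a b : ℝ) (hXd : X = a • A + b • B) :
    Real.sin (angle A X) = |b| * Real.sqrt (1 - ⟪A, B⟫ ^ 2) := by
  have hAn : ⟪A, A⟫ = 1 := by rw [real_inner_self_eq_norm_mul_norm, hA]; ring
  have hBn : ⟪B, B⟫ = 1 := by rw [real_inner_self_eq_norm_mul_norm, hB]; ring
  have key := sin_angle_mul_norm_mul_norm A X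
  have hAX : ⟪A, X⟫ = a + b * ⟪A, B⟫ := by
    simp only [hXd, inner_add_right, real_inner_smul_right, hAn, mul_one]
  have hXX : ⟪X, X⟫ = 1 := by rw [real_inner_self_eq_norm_mul_norm, hX]; ring
  have hXX' : a ^ 2 + 2 * a * b * ⟪A, B⟫ + b ^ 2 = 1 := by
    rw [← hXX]
    simp only [hXd, inner_add_right, inner_add_left, real_inner_smul_right,
      real_inner_smul_left, hAn, hBn, real_inner_comm B A, mul_one]
    ring
  have hgram : ⟪A, A⟫ * ⟪X, X⟫ - ⟪A, X⟫ * ⟪A, X⟫ = b ^ 2 * (1 - ⟪A, B⟫ ^ 2) := by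
    rw [hAn, hXX, hAX]; linear_combination -hXX'
  rw [hgram, Real.sqrt_mul (sq_nonneg b), Real.sqrt_sq_eq_abs, hA, hX] at key
  simpa using key

private lemma unit_smul_aux {A X : EuclideanSpace ℝ (Fin 3)}
    (hA : ‖A‖ = 1) (hX : ‖X‖ = 1) (a : ℝ) (hXd : X = a • A) :
    X = A ∨ X = -A := by
  have : |a| = 1 := by
    have h := congrArg (fun v : EuclideanSpace ℝ (Fin 3) => ‖v‖) hXd
    simp only [norm_smul, hA, mul_one, hX, Real.norm_eq_abs] at h
    exact h.symm
  rcases abs_eq (by norm_num : (0:ℝ) ≤ 1) |>.mp this with h | h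
  · left; rw [hXd, h, one_smul]
  · right; rw [hXd, h, neg_one_smul]

/-- **Spherical Menelaus' theorem (unsigned form).**
If unit vectors `P`, `Q`, `R` on the sides (great circles) of a spherical triangle
`A B C` lie on a common great circle, then the product of the sines of the spherical
distances `∠(A,P)`, `∠(B,Q)`, `∠(C,R)` equals the product of the sines of
`∠(P,B)`, `∠(Q,C)`, `∠(R,A)`. -/
theorem spherical_menelaus
    (A B C P Q R : EuclideanSpace ℝ (Fin 3))
    (hA : ‖A‖ = 1) (hB : ‖B‖ = 1) (hC : ‖C‖ = 1)
    (hP : ‖P‖ = 1) (hQ : ‖Q‖ = 1) (hR : ‖R‖ = 1)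
    (hABC : LinearIndependent ℝ ![A, B, C])
    (hPmem : P ∈ Submodule.span ℝ {A, B})
    (hQmem : Q ∈ Submodule.span ℝ {B, C})
    (hRmem : R ∈ Submodule.span ℝ {C, A})
    (hP1 : P ≠ A) (hP2 : P ≠ -A) (hP3 : P ≠ B) (hP4 : P ≠ -B)
    (hQ1 : Q ≠ B) (hQ2 : Q ≠ -B) (hQ3 : Q ≠ C) (hQ4 : Q ≠ -C)
    (hR1 : R ≠ C) (hR2 : R ≠ -C) (hR3 : R ≠ A) (hR4 : R ≠ -A)
    (hdep : ¬ LinearIndependent ℝ ![P, Q, R]) :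
    Real.sin (angle A P) * Real.sin (angle B Q) * Real.sin (angle C R) =
      Real.sin (angle P B) * Real.sin (angle Q C) * Real.sin (angle R A) := by
  obtain ⟨a1, b1, hPd⟩ := Submodule.mem_span_pair.mp hPmem
  obtain ⟨a2, b2, hQd⟩ := Submodule.mem_span_pair.mp hQmem
  obtain ⟨a3, b3, hRd⟩ := Submodule.mem_span_pair.mp hRmem
  -- sines in terms of coefficients
  have s1 : Real.sin (angle A P) = |b1| * Real.sqrt (1 - ⟪A, B⟫ ^ 2) :=
    sin_angle_aux hA hB hP a1 b1 hPd.symm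
  have s2 : Real.sin (angle B Q) = |b2| * Real.sqrt (1 - ⟪B, C⟫ ^ 2) :=
    sin_angle_aux hB hC hQ a2 b2 hQd.symm
  have s3 : Real.sin (angle C R) = |b3| * Real.sqrt (1 - ⟪C, A⟫ ^ 2) :=
    sin_angle_aux hC hA hR a3 b3 hRd.symm
  have s1' : Real.sin (angle P B) = |a1| * Real.sqrt (1 - ⟪A, B⟫ ^ 2) := by
    rw [angle_comm, sin_angle_aux hB hA hP b1 a1 (by rw [← hPd, add_comm]),
      real_inner_comm B A]
  have s2' : Real.sin (angle Q C) = |a2| * Real.sqrt (1 - ⟪B, C⟫ ^ 2) := by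
    rw [angle_comm, sin_angle_aux hC hB hQ b2 a2 (by rw [← hQd, add_comm]),
      real_inner_comm C B]
  have s3' : Real.sin (angle R A) = |a3| * Real.sqrt (1 - ⟪C, A⟫ ^ 2) := by
    rw [angle_comm, sin_angle_aux hA hC hR b3 a3 (by rw [← hRd, add_comm]),
      real_inner_comm A C]
  -- dependence relation
  obtain ⟨g, hsum, i, hgi⟩ := Fintype.not_linearIndependent_iff.mp hdep
  set c := g 0 with hc_def
  set d := g 1 with hd_def
  set e := g 2 with he_def
  have hsum' : c • P + d • Q + e • R = 0 := by
    simpa [Fin.sum_univ_three] using hsum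
  have hne : c ≠ 0 ∨ d ≠ 0 ∨ e ≠ 0 := by
    fin_cases i
    · exact Or.inl hgi
    · exact Or.inr (Or.inl hgi)
    · exact Or.inr (Or.inr hgi)
  have hcomb : (c * a1 + e * b3) • A + (c * b1 + d * a2) • B + (d * b2 + e * a3) • C = 0 := by
    rw [← hsum', ← hPd, ← hQd, ← hRd]
    module
  have hz := Fintype.linearIndependent_iff.mp hABC
      ![c * a1 + e * b3, c * b1 + d * a2, d * b2 + e * a3]
      (by simpa [Fin.sum_univ_three] using hcomb)
  have eq0 : c * a1 + e * b3 = 0 := by simpa using hz 0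
  have eq1 : c * b1 + d * a2 = 0 := by simpa using hz 1
  have eq2 : d * b2 + e * a3 = 0 := by simpa using hz 2
  -- nonvanishing of c
  have hc : c ≠ 0 := by
    intro hc0
    rw [hc0, zero_mul, zero_add] at eq0 eq1
    by_cases hd0 : d = 0
    · have he0 : e ≠ 0 := by rcases hne with h | h | h <;> simp_all
      rw [hd0, zero_mul, zero_add] at eq2
      have hb3 : b3 = 0 := (mul_eq_zero.mp eq0).resolve_left he0
      have ha3 : a3 = 0 := (mul_eq_zero.mp eq2).resolve_left he0
      have : R = 0 := by rw [← hRd, ha3, hb3]; simp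
      rw [this] at hR; simp at hR
    · have ha2 : a2 = 0 := (mul_eq_zero.mp eq1).resolve_left hd0
      have hQC : Q = b2 • C := by rw [← hQd, ha2]; simp
      rcases unit_smul_aux hC hQ b2 hQC with h | h
      · exact hQ3 h
      · exact hQ4 h
  -- nonvanishing of d
  have hd : d ≠ 0 := by
    intro hd0
    rw [hd0, zero_mul, add_zero] at eq1
    have hb1 : b1 = 0 := (mul_eq_zero.mp eq1).resolve_left hc
    have hPA : P = a1 • A := by rw [← hPd, hb1]; simp
    rcases unit_smul_aux hA hP a1 hPA with h | h
    · exact hP1 h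
    · exact hP2 h
  -- nonvanishing of e
  have he : e ≠ 0 := by
    intro he0
    rw [he0, zero_mul, add_zero] at eq0
    have ha1 : a1 = 0 := (mul_eq_zero.mp eq0).resolve_left hc
    have hPB : P = b1 • B := by rw [← hPd, ha1]; simp
    rcases unit_smul_aux hB hP b1 hPB with h | h
    · exact hP3 h
    · exact hP4 h
  -- the product relation
  have h1 : c * a1 = -(e * b3) := by linarith
  have h2 : d * a2 = -(c * b1) := by linarith
  have h3 : e * a3 = -(d * b2) := by linarith
  have hm : (c * a1) * ((d * a2) * (e * a3)) = (-(e * b3)) * ((-(c * b1)) * (-(d * b2))) := by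
    rw [h1, h2, h3]
  have hprod : a1 * a2 * a3 = -(b1 * b2 * b3) :=
    mul_left_cancel₀ (mul_ne_zero hc (mul_ne_zero hd he)) (by linear_combination hm)
  have habs : |a1| * |a2| * |a3| = |b1| * |b2| * |b3| := by
    have : |a1 * a2 * a3| = |b1 * b2 * b3| := by rw [hprod, abs_neg]
    simpa [abs_mul] using this
  rw [s1, s2, s3, s1', s2', s3']
  linear_combination (Real.sqrt (1 - ⟪A, B⟫ ^ 2) * Real.sqrt (1 - ⟪B, C⟫ ^ 2) *
    Real.sqrt (1 - ⟪C, A⟫ ^ 2)) * habs.symm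
end
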